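/- The reversion of g_{α,β} is the rational series 1/(1 + αx + βx²): if g satisfies g = 1/(1 − αx − βx²g) with g(0)=1, then the compositional inverse of x·g(x) is x/(1 + αx + βx²). -/

import Mathlib

open PowerSeries Finset

/-- Composition (substitution) of formal power series, meaningful when the
second argument has zero constant term. -/
noncomputable def psComp {K : Type*} [Field K] (f g : K⟦X⟧) : K⟦X⟧ :=
  PowerSeries.mk fun n => ∑ k ∈ Finset.range (n + 1), coeff k f * coeff n (g ^ k)

/-- The `s`-INVERT transform: `g(x) ↦ g(x)/(1 - s·x·g(x))`. -/
noncomputable def invertT {K : Type*} [Field K] (s : K) (g : K⟦X⟧) : K⟦X⟧ :=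
  g * (1 - C s * X * g)⁻¹

/-- The mean-INVERT transform: `g(x) ↦ g(x)/(1 - r·x²·g(x)²)`. -/
noncomputable def minvertT {K : Type*} [Field K] (r : K) (g : K⟦X⟧) : K⟦X⟧ :=
  g * (1 - C r * X ^ 2 * g ^ 2)⁻¹

section Aux

variable {K : Type*} [Field K]

lemma psAux_coeff_pow_eq_zero {u : K⟦X⟧} (hu : constantCoeff u = 0) {n k : ℕ} (h : n < k) :
    coeff n (u ^ k) = 0 := by
  have hd : (X : K⟦X⟧) ^ k ∣ u ^ k := pow_dvd_pow_of_dvd (X_dvd_iff.mpr hu) k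
  exact (X_pow_dvd_iff.mp hd) n h

lemma psAux_coeff_aeval {u : K⟦X⟧} (hu : constantCoeff u = 0) (p : Polynomial K) (n : ℕ) :
    coeff n (Polynomial.aeval u p) =
      ∑ k ∈ range (n + 1), p.coeff k * coeff n (u ^ k) := by
  set N := max (n + 1) (p.natDegree + 1) with hN
  rw [Polynomial.aeval_eq_sum_range' (lt_of_lt_of_le (Nat.lt_succ_self _) (le_max_right _ _))
    (n := N)]
  rw [map_sum]
  have h1 : ∑ i ∈ range N, coeff n (p.coeff i • u ^ i)
      = ∑ i ∈ range N, p.coeff i * coeff n (u ^ i) := by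
    refine Finset.sum_congr rfl fun i _ => ?_
    rw [coeff_smul, smul_eq_mul]
  rw [h1]
  refine (Finset.sum_subset (Finset.range_subset_range.mpr (le_max_left _ _)) ?_).symm
  intro i _ hi
  rw [Finset.mem_range, not_lt] at hi
  rw [psAux_coeff_pow_eq_zero hu (by omega)]
  ring

lemma psAux_coeff_psComp {u : K⟦X⟧} (hu : constantCoeff u = 0) (f : K⟦X⟧) {n m : ℕ}
    (h : n < m) :
    coeff n (psComp f u) = coeff n (Polynomial.aeval u (trunc m f)) := by
  rw [psComp, coeff_mk, psAux_coeff_aeval hu]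
  refine Finset.sum_congr rfl fun k hk => ?_
  rw [Finset.mem_range] at hk
  rw [coeff_trunc, if_pos (by omega)]

lemma psAux_aeval_congr {u : K⟦X⟧} (hu : constantCoeff u = 0) {n : ℕ} {p q : Polynomial K}
    (h : ∀ k ≤ n, p.coeff k = q.coeff k) :
    coeff n (Polynomial.aeval u p) = coeff n (Polynomial.aeval u q) := by
  rw [psAux_coeff_aeval hu, psAux_coeff_aeval hu]
  refine Finset.sum_congr rfl fun k hk => ?_
  rw [Finset.mem_range] at hk
  rw [h k (by omega)]

lemma psComp_mul {u : K⟦X⟧} (hu : constantCoeff u = 0) (f h : K⟦X⟧) :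
    psComp (f * h) u = psComp f u * psComp h u := by
  ext n
  rw [psAux_coeff_psComp hu _ (Nat.lt_succ_self n), PowerSeries.coeff_mul]
  have h1 : ∀ p ∈ antidiagonal n,
      coeff p.1 (psComp f u) * coeff p.2 (psComp h u)
        = coeff p.1 (Polynomial.aeval u (trunc (n + 1) f))
            * coeff p.2 (Polynomial.aeval u (trunc (n + 1) h)) := by
    intro p hp
    rw [Finset.HasAntidiagonal.mem_antidiagonal] at hp
    rw [psAux_coeff_psComp hu f (show p.1 < n + 1 by omega),
        psAux_coeff_psComp hu h (show p.2 < n + 1 by omega)]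
  rw [Finset.sum_congr rfl h1, ← PowerSeries.coeff_mul, ← map_mul]
  refine psAux_aeval_congr hu fun k hk => ?_
  rw [coeff_trunc, if_pos (by omega), Polynomial.coeff_mul, PowerSeries.coeff_mul]
  refine Finset.sum_congr rfl fun p hp => ?_
  rw [Finset.HasAntidiagonal.mem_antidiagonal] at hp
  rw [coeff_trunc, if_pos (by omega), coeff_trunc, if_pos (by omega)]

lemma psComp_sub {u : K⟦X⟧} (f h : K⟦X⟧) :
    psComp (f - h) u = psComp f u - psComp h u := by
  ext n
  simp [psComp, coeff_mk, sub_mul, Finset.sum_sub_distrib]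

lemma psComp_one {u : K⟦X⟧} (hu : constantCoeff u = 0) :
    psComp (1 : K⟦X⟧) u = 1 := by
  ext n
  rw [psAux_coeff_psComp hu _ (Nat.lt_succ_self n), trunc_one, map_one]

lemma psComp_C {u : K⟦X⟧} (hu : constantCoeff u = 0) (a : K) :
    psComp (C a) u = C a := by
  ext n
  rw [psAux_coeff_psComp hu _ (Nat.lt_succ_self n), trunc_C, Polynomial.aeval_C]
  rfl

lemma psComp_X {u : K⟦X⟧} (hu : constantCoeff u = 0) :
    psComp (X : K⟦X⟧) u = u := by
  ext n
  rw [psAux_coeff_psComp hu _ (show n < n + 2 by omega), trunc_X, Polynomial.aeval_X]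

end Aux

theorem rev_jacobi_constant {K : Type*} [Field K] [CharZero K] (α β : K) (g : K⟦X⟧)
    (hg0 : constantCoeff g = 1)
    (hg : g * (1 - C α * X - C β * X ^ 2 * g) = 1) :
    psComp (X * g) (X * (1 + C α * X + C β * X ^ 2)⁻¹) = X := by
  set h : K⟦X⟧ := (1 + C α * X + C β * X ^ 2)⁻¹ with hh
  set u : K⟦X⟧ := X * h with hudef
  have hu : constantCoeff u = 0 := by simp [hudef]
  have hS : constantCoeff (1 + C α * X + C β * X ^ 2) ≠ 0 := by
    simp
  have hux : u * (1 + C α * X + C β * X ^ 2) = X := by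
    rw [hudef, mul_assoc, hh, PowerSeries.inv_mul_cancel _ hS, mul_one]
  set G : K⟦X⟧ := psComp g u with hGdef
  have hG : G * (1 - C α * u - C β * u ^ 2 * G) = 1 := by
    have := congrArg (fun f => psComp f u) hg
    simp only [pow_two] at this ⊢
    simp only [psComp_mul hu, psComp_sub, psComp_one hu, psComp_C hu, psComp_X hu] at this
    rw [← hGdef] at this
    linear_combination this
  have h1 : u * (G * (1 - C α * u - C β * u ^ 2 * G)) = u := by rw [hG, mul_one]
  have key : (u * G - X) * (1 - u * (C α + C β * (u * G + X))) = 0 := by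
    linear_combination h1 + hux
  rcases mul_eq_zero.mp key with hw | hw
  · rw [psComp_mul hu, psComp_X hu, ← hGdef, sub_eq_zero.mp hw]
  · exfalso
    have := congrArg (constantCoeff) hw
    simp [hu] at this
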